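/- Let (h_k) and (g_k) be sequences of pairwise disjoint measurable subsets of (0,1) with λ(h_k) = 2^{−k−2^k} and λ(g_k) = 4^{−k−4^k} for k ≥ 1, and let x = ∑_{k≥1} 2^{2^k} χ_{h_k} and y = ∑_{k≥1} 4^{4^k} χ_{g_k}. Then there is no constant C > 0 such that n_x(C·τ) ≤ C·n_y(τ) for all τ > 0; in particular the distributions of x and y are not equivalent. -/

import Mathlib

open MeasureTheory Set

noncomputable section

/-- The distribution function `n_f` of a measurable function on `(0,1)`. -/
def distribFun (f : ℝ → ℝ) (τ : ℝ) : ℝ :=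
  (volume {u ∈ Ioo (0:ℝ) 1 | τ < |f u|}).toReal

/-- The distributions of `x = ∑_{k≥1} 2^{2^k} χ_{h_k}` and `y = ∑_{k≥1} 4^{4^k} χ_{g_k}`
(where `λ(h_k) = 2^{-k-2^k}`, `λ(g_k) = 4^{-k-4^k}`) are not equivalent: there is no `C > 0`
with `n_x(Cτ) ≤ C n_y(τ)` for all `τ > 0`. -/
theorem distributions_not_equivalent
    (h g : ℕ → Set ℝ)
    (hmeas : ∀ k, MeasurableSet (h k)) (gmeas : ∀ k, MeasurableSet (g k))
    (hsub : ∀ k, h k ⊆ Ioo (0:ℝ) 1) (gsub : ∀ k, g k ⊆ Ioo (0:ℝ) 1)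
    (hdisj : Pairwise (Function.onFun Disjoint h))
    (gdisj : Pairwise (Function.onFun Disjoint g))
    (hvol : ∀ k : ℕ, 1 ≤ k →
      volume (h k) = ENNReal.ofReal ((2:ℝ) ^ (-(k:ℝ) - (2:ℝ) ^ (k:ℝ))))
    (gvol : ∀ k : ℕ, 1 ≤ k →
      volume (g k) = ENNReal.ofReal ((4:ℝ) ^ (-(k:ℝ) - (4:ℝ) ^ (k:ℝ))))
    (x y : ℝ → ℝ)
    (hx : ∀ s, x s =
      ∑' k : ℕ, (2:ℝ) ^ ((2:ℝ) ^ ((k:ℝ) + 1)) * (h (k + 1)).indicator (fun _ => (1:ℝ)) s)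
    (hy : ∀ s, y s =
      ∑' k : ℕ, (4:ℝ) ^ ((4:ℝ) ^ ((k:ℝ) + 1)) * (g (k + 1)).indicator (fun _ => (1:ℝ)) s) :
    ¬ ∃ C > (0:ℝ), ∀ τ : ℝ, 0 < τ → distribFun x (C * τ) ≤ C * distribFun y τ := by
  rintro ⟨C, hC, H⟩
  -- value of x on h (m+1)
  have hxval : ∀ m s, s ∈ h (m+1) → x s = (2:ℝ)^((2:ℝ)^((m:ℝ)+1)) := by
    intro m s hs
    rw [hx s, tsum_eq_single m]
    · rw [Set.indicator_of_mem hs, mul_one]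
    · intro j hj
      have hne : j + 1 ≠ m + 1 := by simpa using hj
      have : s ∉ h (j+1) := fun hsj => Set.disjoint_left.mp (hdisj hne) hsj hs
      rw [Set.indicator_of_notMem this, mul_zero]
  have hyval : ∀ m s, s ∈ g (m+1) → y s = (4:ℝ)^((4:ℝ)^((m:ℝ)+1)) := by
    intro m s hs
    rw [hy s, tsum_eq_single m]
    · rw [Set.indicator_of_mem hs, mul_one]
    · intro j hj
      have hne : j + 1 ≠ m + 1 := by simpa using hj
      have : s ∉ g (j+1) := fun hsj => Set.disjoint_left.mp (gdisj hne) hsj hs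
      rw [Set.indicator_of_notMem this, mul_zero]
  have hy0 : ∀ s, (∀ m, s ∉ g (m+1)) → y s = 0 := by
    intro s hsg
    rw [hy s]
    have : ∀ m : ℕ, (4:ℝ) ^ ((4:ℝ) ^ ((m:ℝ) + 1)) * (g (m + 1)).indicator (fun _ => (1:ℝ)) s = 0 := by
      intro m; rw [Set.indicator_of_notMem (hsg m), mul_zero]
    simp [this]
  obtain ⟨N, hN⟩ : ∃ N : ℕ, 2*C < 2^N := pow_unbounded_of_one_lt (2*C) one_lt_two
  have h24 : (4:ℝ) = (2:ℝ)^(2:ℝ) := by norm_num [Real.rpow_natCast]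
  have four_rpow : ∀ z : ℝ, (4:ℝ)^z = (2:ℝ)^(2*z) := by
    intro z
    rw [h24, ← Real.rpow_mul (by norm_num : (0:ℝ) ≤ 2)]
  have cast_pow : ∀ n : ℕ, ((2^n : ℕ) : ℝ) = (2:ℝ)^((n:ℕ):ℝ) := by
    intro n; rw [Real.rpow_natCast]; push_cast; ring
  set t : ℝ := (2:ℝ)^(2*(N:ℝ)+2) with ht
  have htpos : 0 < t := Real.rpow_pos_of_pos two_pos _
  set τ : ℝ := (2:ℝ)^t / (2*C) with hτ
  have hCpos : (0:ℝ) < 2*C := by linarith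
  have hτpos : 0 < τ := div_pos (Real.rpow_pos_of_pos two_pos t) hCpos
  have key := H τ hτpos
  have two_le : ∀ a b : ℝ, a ≤ b → (2:ℝ)^a ≤ (2:ℝ)^b :=
    fun a b hab => Real.rpow_le_rpow_left_iff one_lt_two |>.mpr hab
  -- t is big: 3N + 2 < t and N ≤ t/2
  have htbig : 3*(N:ℝ) + 2 < t := by
    have hn4 : N < 4^N := Nat.lt_pow_self (by norm_num)
    have hnat : 3*N + 2 < 2^(2*N+2) := by
      have h1 : (2:ℕ)^(2*N+2) = 4 * 4^N := by
        rw [pow_add, pow_mul]; norm_num; ring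
      omega
    have h2 := (Nat.cast_lt (α := ℝ)).mpr hnat
    rw [cast_pow] at h2
    calc 3*(N:ℝ)+2 = ((3*N+2 : ℕ) : ℝ) := by push_cast; ring
      _ < (2:ℝ)^(((2*N+2:ℕ)):ℝ) := h2
      _ = t := by rw [ht]; congr 1; push_cast; ring
  have hNhalf : (2:ℝ)^(N:ℝ) ≤ (2:ℝ)^(t/2) := by
    apply two_le
    have : (N:ℝ) < (2:ℝ)^(2*(N:ℝ)+1) := by
      have hn : (N:ℕ) < 2^(2*N+1) := Nat.lt_of_lt_of_le Nat.lt_two_pow_self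
        (Nat.pow_le_pow_right (by norm_num) (by omega))
      have := (Nat.cast_lt (α := ℝ)).mpr hn
      calc (N:ℝ) < ((2^(2*N+1) : ℕ) : ℝ) := by exact_mod_cast this
        _ = (2:ℝ)^(2*(N:ℝ)+1) := by
            rw [cast_pow]; congr 1; push_cast; ring
    have ht2 : t = (2:ℝ)^(2*(N:ℝ)+1) * 2 := by
      rw [ht, show 2*(N:ℝ)+2 = (2*(N:ℝ)+1) + 1 by ring, Real.rpow_add two_pos, Real.rpow_one]
    have : t/2 = (2:ℝ)^(2*(N:ℝ)+1) := by rw [ht2]; ring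
    rw [this]; linarith
  have h2N : (2:ℝ)^(N:ℝ) = (2:ℝ)^(N:ℕ) := Real.rpow_natCast 2 N
  -- Lower bound for n_x(Cτ)
  have hxlow : (2:ℝ)^(-(2*(N:ℝ)+2) - t) ≤ distribFun x (C*τ) := by
    have hCτ : C * τ = (2:ℝ)^t / 2 := by
      rw [hτ]; field_simp
    have hsubset : h (2*N+2) ⊆ {u ∈ Ioo (0:ℝ) 1 | C*τ < |x u|} := by
      intro s hs
      refine ⟨hsub _ hs, ?_⟩
      have hxs : x s = (2:ℝ)^t := by
        have := hxval (2*N+1) s hs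
        rw [this, ht]
        congr 1
        push_cast; ring
      rw [hxs, abs_of_pos (Real.rpow_pos_of_pos two_pos t), hCτ]
      have := Real.rpow_pos_of_pos (two_pos (α := ℝ)) t
      linarith
    have hvolk : volume (h (2*N+2)) = ENNReal.ofReal ((2:ℝ)^(-(2*(N:ℝ)+2) - t)) := by
      have hexp : -(((2*N+2 : ℕ)):ℝ) - (2:ℝ)^(((2*N+2:ℕ)):ℝ) = -(2*(N:ℝ)+2) - t := by
        rw [ht]; push_cast; ring_nf
      rw [hvol (2*N+2) (by omega), hexp]
    have hfin : volume {u ∈ Ioo (0:ℝ) 1 | C*τ < |x u|} ≠ ⊤ := by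
      have : volume {u ∈ Ioo (0:ℝ) 1 | C*τ < |x u|} ≤ volume (Ioo (0:ℝ) 1) :=
        measure_mono (fun u hu => hu.1)
      exact (lt_of_le_of_lt this (by simp)).ne
    have hle : ENNReal.ofReal ((2:ℝ)^(-(2*(N:ℝ)+2) - t)) ≤
        volume {u ∈ Ioo (0:ℝ) 1 | C*τ < |x u|} := by
      rw [← hvolk]; exact measure_mono hsubset
    have := ENNReal.toReal_mono hfin hle
    rwa [ENNReal.toReal_ofReal (Real.rpow_nonneg (by norm_num) _)] at this
  -- Upper bound for n_y(τ)
  have hyhigh : distribFun y τ ≤ 2 * (2:ℝ)^(-(2*t)) := by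
    have hsubset : {u ∈ Ioo (0:ℝ) 1 | τ < |y u|} ⊆ ⋃ j : ℕ, g (j + (N+1)) := by
      rintro u ⟨hu1, hu2⟩
      by_cases hcase : ∀ m, u ∉ g (m+1)
      · exfalso; rw [hy0 u hcase, abs_zero] at hu2; linarith
      · push_neg at hcase; obtain ⟨m, hm⟩ := hcase
        have hyu : y u = (4:ℝ)^((4:ℝ)^((m:ℝ)+1)) := hyval m u hm
        have hmN : N ≤ m := by
          by_contra hlt
          push_neg at hlt
          have hm1N : (m:ℝ) + 1 ≤ (N:ℝ) := by exact_mod_cast hlt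
          -- 4^(4^(m+1)) ≤ 4^(4^N) = 2^(2·4^N) = 2^(2^(2N+1)) = 2^(t/2) ≤ τ
          have hstep1 : (4:ℝ)^((4:ℝ)^((m:ℝ)+1)) ≤ (2:ℝ)^(t/2) := by
            have h4e : (4:ℝ)^((m:ℝ)+1) ≤ (4:ℝ)^(N:ℝ) :=
              Real.rpow_le_rpow_left_iff (by norm_num) |>.mpr hm1N
            have h4N : 2 * (4:ℝ)^(N:ℝ) = t/2 := by
              rw [four_rpow, ht]
              rw [show (2:ℝ)^(2*(N:ℝ)+2) = (2:ℝ)^(2*(N:ℝ)+1) * 2 by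
                rw [show 2*(N:ℝ)+2 = (2*(N:ℝ)+1)+1 by ring, Real.rpow_add two_pos,
                  Real.rpow_one]]
              rw [show (2:ℝ)^(2*(N:ℝ)+1) = 2 * (2:ℝ)^(2*(N:ℝ)) by
                rw [show 2*(N:ℝ)+1 = (2*(N:ℝ))+1 by ring, Real.rpow_add two_pos,
                  Real.rpow_one]; ring]
              ring
            calc (4:ℝ)^((4:ℝ)^((m:ℝ)+1)) = (2:ℝ)^(2 * (4:ℝ)^((m:ℝ)+1)) := four_rpow _
              _ ≤ (2:ℝ)^(2 * (4:ℝ)^(N:ℝ)) := two_le _ _ (by linarith)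
              _ = (2:ℝ)^(t/2) := by rw [h4N]
          have hstep2 : (2:ℝ)^(t/2) ≤ τ := by
            rw [hτ, le_div_iff₀ hCpos]
            have : (2:ℝ)^(t/2) * (2:ℝ)^(t/2) = (2:ℝ)^t := by
              rw [← Real.rpow_add two_pos]; norm_num
            calc (2:ℝ)^(t/2) * (2*C) ≤ (2:ℝ)^(t/2) * (2:ℝ)^(N:ℕ) := by
                  apply mul_le_mul_of_nonneg_left (le_of_lt hN)
                    (le_of_lt (Real.rpow_pos_of_pos two_pos _))
              _ ≤ (2:ℝ)^(t/2) * (2:ℝ)^(t/2) := by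
                  apply mul_le_mul_of_nonneg_left _ (le_of_lt (Real.rpow_pos_of_pos two_pos _))
                  rw [← h2N]; exact hNhalf
              _ = (2:ℝ)^t := this
          rw [hyu, abs_of_pos (Real.rpow_pos_of_pos (by norm_num) _)] at hu2
          linarith
        refine Set.mem_iUnion.mpr ⟨m - N, ?_⟩
        rwa [show m - N + (N+1) = m+1 by omega]
    -- measure bound
    have c_eq : (4:ℝ)^(-(4:ℝ)^((N:ℝ)+1)) = (2:ℝ)^(-(2*t)) := by
      rw [four_rpow, four_rpow, ht]
      congr 1
      rw [show 2*((N:ℝ)+1) = 2*(N:ℝ)+2 by ring]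
      ring
    have hterm : ∀ j : ℕ, volume (g (j + (N+1))) ≤
        ENNReal.ofReal ((2:ℝ)^(-(2*t)) * (1/4)^j) := by
      intro j
      rw [gvol _ (by omega)]
      apply ENNReal.ofReal_le_ofReal
      rw [← c_eq]
      have h14 : ((1:ℝ)/4)^j = (4:ℝ)^(-(j:ℝ)) := by
        rw [Real.rpow_neg (by norm_num), Real.rpow_natCast, one_div, inv_pow]
      rw [h14, ← Real.rpow_add (by norm_num : (0:ℝ) < 4)]
      apply Real.rpow_le_rpow_left_iff (by norm_num : (1:ℝ) < 4) |>.mpr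
      have hcast : ((j + (N+1) : ℕ) : ℝ) = (j:ℝ) + (N:ℝ) + 1 := by push_cast; ring
      rw [hcast]
      have h4le : (4:ℝ)^((N:ℝ)+1) ≤ (4:ℝ)^((j:ℝ)+(N:ℝ)+1) :=
        Real.rpow_le_rpow_left_iff (by norm_num) |>.mpr (by
          have : (0:ℝ) ≤ (j:ℝ) := Nat.cast_nonneg j
          linarith)
      linarith
    have hsum : volume (⋃ j : ℕ, g (j + (N+1))) ≤ ENNReal.ofReal (2 * (2:ℝ)^(-(2*t))) := by
      refine le_trans (measure_iUnion_le _) ?_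
      calc ∑' j : ℕ, volume (g (j + (N+1)))
          ≤ ∑' j : ℕ, ENNReal.ofReal ((2:ℝ)^(-(2*t)) * (1/4)^j) := ENNReal.tsum_le_tsum hterm
        _ = ENNReal.ofReal (∑' j : ℕ, (2:ℝ)^(-(2*t)) * (1/4)^j) := by
            rw [ENNReal.ofReal_tsum_of_nonneg]
            · intro j
              positivity
            · apply Summable.mul_left
              exact summable_geometric_of_lt_one (by norm_num) (by norm_num)
        _ ≤ ENNReal.ofReal (2 * (2:ℝ)^(-(2*t))) := by
            apply ENNReal.ofReal_le_ofReal
            rw [tsum_mul_left, tsum_geometric_of_lt_one (by norm_num) (by norm_num)]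
            have hpos : (0:ℝ) < (2:ℝ)^(-(2*t)) := Real.rpow_pos_of_pos two_pos _
            rw [show ((1:ℝ) - 1/4)⁻¹ = 4/3 by norm_num]
            nlinarith
    have hfin : ENNReal.ofReal (2 * (2:ℝ)^(-(2*t))) ≠ ⊤ := ENNReal.ofReal_ne_top
    have := ENNReal.toReal_mono hfin (le_trans (measure_mono hsubset) hsum)
    rwa [ENNReal.toReal_ofReal (by positivity)] at this
  -- Combine
  have hCy : C * distribFun y τ < (2:ℝ)^((N:ℝ) - 2*t) := by
    have hdpos : 0 ≤ distribFun y τ := ENNReal.toReal_nonneg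
    have h1 : C * distribFun y τ ≤ C * (2 * (2:ℝ)^(-(2*t))) :=
      mul_le_mul_of_nonneg_left hyhigh (le_of_lt hC)
    have h2 : C * (2 * (2:ℝ)^(-(2*t))) < (2:ℝ)^(N:ℝ) * (2:ℝ)^(-(2*t)) := by
      rw [h2N]
      have hpos : (0:ℝ) < (2:ℝ)^(-(2*t)) := Real.rpow_pos_of_pos two_pos _
      nlinarith
    have h3 : (2:ℝ)^(N:ℝ) * (2:ℝ)^(-(2*t)) = (2:ℝ)^((N:ℝ) - 2*t) := by
      rw [← Real.rpow_add two_pos]; ring_nf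
    linarith
  have hfinal : (2:ℝ)^(-(2*(N:ℝ)+2) - t) < (2:ℝ)^((N:ℝ) - 2*t) := by
    calc (2:ℝ)^(-(2*(N:ℝ)+2) - t) ≤ distribFun x (C*τ) := hxlow
      _ ≤ C * distribFun y τ := key
      _ < (2:ℝ)^((N:ℝ) - 2*t) := hCy
  have := (Real.rpow_lt_rpow_left_iff one_lt_two).mp hfinal
  -- -(2N+2) - t < N - 2t  ⟹  t < 3N + 2, contradiction
  linarith
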